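/- Let C ⊆ E be a convex set and F a proper face of C. Then the smallest exposed face sup⊥(F) of C containing F is a proper exposed face of C and equals ⋂_{u ∈ N(C,F)\{0}} F⊥(C,u); the relative interior ri(N(C,F)) contains a nonzero vector, and for every nonzero v ∈ ri(N(C,F)) one has sup⊥(F) = F⊥(C,v); furthermore N(C, sup⊥(F)) = N(C,F). -/

import Mathlib

open scoped Pointwise RealInnerProductSpace

variable {E : Type*} [NormedAddCommGroup E] [InnerProductSpace ℝ E] [FiniteDimensional ℝ E]

/-- `F` is a face of the convex set `C`: a convex subset of `C` such that whenever an open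
segment between two points of `C` meets `F`, both endpoints belong to `F`. -/
def IsFace (C F : Set E) : Prop :=
  Convex ℝ F ∧ F ⊆ C ∧
    ∀ x ∈ C, ∀ y ∈ C, (openSegment ℝ x y ∩ F).Nonempty → x ∈ F ∧ y ∈ F

/-- The exposed face `F⊥(C,u)` of `C` by the vector `u`: the points of `C` where `⟨u,·⟩`
attains its supremum over `C`. -/
def expFace (C : Set E) (u : E) : Set E :=
  {x ∈ C | ∀ y ∈ C, ⟪u, y⟫ ≤ ⟪u, x⟫}

/-- `F` is an exposed face of `C`: either `∅`, or `C`, or `F⊥(C,u)` for some nonzero `u`. -/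
def IsExpFace (C F : Set E) : Prop :=
  F = ∅ ∨ F = C ∨ ∃ u : E, u ≠ 0 ∧ F = expFace C u

/-- The normal cone `N(C,x)` of `C` at the point `x`. -/
def normalCone (C : Set E) (x : E) : Set E :=
  {u | ∀ y ∈ C, ⟪u, y - x⟫ ≤ 0}

/-- The normal cone `N(C,F)` of `C` at a subset `F`; for a nonempty convex `F ⊆ C` it agrees
with `normalCone C x` for any `x` in the relative interior of `F` (all these coincide), and
for `F = ∅` it is all of `E`. -/
def normalConeOf (C F : Set E) : Set E :=
  ⋂ x ∈ intrinsicInterior ℝ F, normalCone C x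

/-- `N` is a normal cone of `C`: the normal cone of some face of `C`. -/
def IsNormalCone (C N : Set E) : Prop :=
  ∃ F, IsFace C F ∧ N = normalConeOf C F

/-- `T` is a touching cone of `C`: a nonempty face of a normal cone of `C`. -/
def IsTouchingCone (C T : Set E) : Prop :=
  T.Nonempty ∧ ∃ N, IsNormalCone C N ∧ IsFace N T

/-- The positive hull of a set: all finite nonnegative combinations (`posHull ∅ = {0}`). -/
def posHull (S : Set E) : Set E :=
  {x | ∃ (k : ℕ) (c : Fin k → ℝ) (s : Fin k → E),
    (∀ i, 0 ≤ c i) ∧ (∀ i, s i ∈ S) ∧ x = ∑ i, c i • s i}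

/-- A vector `u` is sharp normal for `C` if every `x ∈ ri(F⊥(C,u))` satisfies
`u ∈ ri(N(C,x))`. -/
def SharpNormal (C : Set E) (u : E) : Prop :=
  ∀ x ∈ intrinsicInterior ℝ (expFace C u), u ∈ intrinsicInterior ℝ (normalCone C x)

/-- A point `x` is sharp exposed in `C` if every nonzero `u ∈ ri(N(C,x))` satisfies
`x ∈ ri(F⊥(C,u))`. -/
def SharpExposed (C : Set E) (x : E) : Prop :=
  ∀ u ∈ intrinsicInterior ℝ (normalCone C x), u ≠ 0 → x ∈ intrinsicInterior ℝ (expFace C u)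

/-- The smallest exposed face of `C` containing `F`: the intersection of all exposed faces
of `C` containing `F`. -/
def supExp (C F : Set E) : Set E :=
  ⋂₀ {G | IsExpFace C G ∧ F ⊆ G}

/-- The polar body of `K`. -/
def polarBody (K : Set E) : Set E := {u | ∀ y ∈ K, ⟪u, y⟫ ≤ 1}

set_option linter.unusedSectionVars false

/-- For a proper face `F` of a convex set `C`: the smallest exposed face
`sup⊥(F)` is a proper exposed face, equals `⋂_{u ∈ N(C,F)\{0}} F⊥(C,u)`; `ri(N(C,F))`
contains a nonzero vector; for every nonzero `v ∈ ri(N(C,F))`, `sup⊥(F) = F⊥(C,v)`;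
and `N(C, sup⊥(F)) = N(C,F)`. -/
lemma aux_intrinsic_ball {s : Set E} {a : E} (ha : a ∈ intrinsicInterior ℝ s) :
    ∃ ε > 0, ∀ y ∈ affineSpan ℝ s, dist y a < ε → y ∈ intrinsicInterior ℝ s := by
  obtain ⟨b, hb, rfl⟩ := mem_intrinsicInterior.1 ha
  obtain ⟨ε, hε, hball⟩ := Metric.isOpen_iff.1 isOpen_interior b hb
  refine ⟨ε, hε, fun y hy hdist => ?_⟩
  refine mem_intrinsicInterior.2 ⟨⟨y, hy⟩, hball ?_, rfl⟩
  rwa [Metric.mem_ball, Subtype.dist_eq]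

lemma aux_intrinsic_of_ball {s : Set E} {a : E} (has : a ∈ s) {ε : ℝ} (hε : 0 < ε)
    (h : ∀ y ∈ affineSpan ℝ s, dist y a < ε → y ∈ s) : a ∈ intrinsicInterior ℝ s := by
  refine mem_intrinsicInterior.2 ⟨⟨a, subset_affineSpan ℝ s has⟩, ?_, rfl⟩
  rw [mem_interior_iff_mem_nhds, Metric.mem_nhds_iff]
  refine ⟨ε, hε, fun w hw => h w w.2 ?_⟩
  rwa [Metric.mem_ball, Subtype.dist_eq] at hw

lemma aux_extend {s : Set E} {a b : E} (ha : a ∈ intrinsicInterior ℝ s)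
    (hb : b ∈ affineSpan ℝ s) : ∃ ε : ℝ, 0 < ε ∧ a + ε • (a - b) ∈ s := by
  obtain ⟨ε, hε, h⟩ := aux_intrinsic_ball ha
  have has : a ∈ s := intrinsicInterior_subset ha
  have haspan : a ∈ affineSpan ℝ s := subset_affineSpan ℝ s has
  by_cases hab : a = b
  · exact ⟨1, one_pos, by subst hab; simpa using has⟩
  · have hnorm : 0 < ‖a - b‖ := by rw [norm_pos_iff, sub_ne_zero]; exact hab
    set δ := ε / (2 * ‖a - b‖) with hδ
    have hδpos : 0 < δ := by positivity
    refine ⟨δ, hδpos, intrinsicInterior_subset (h _ ?_ ?_)⟩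
    · have h1 : a - b ∈ (affineSpan ℝ s).direction :=
        AffineSubspace.vsub_mem_direction haspan hb
      have h2 : δ • (a - b) ∈ (affineSpan ℝ s).direction := Submodule.smul_mem _ _ h1
      have h3 := AffineSubspace.vadd_mem_of_mem_direction h2 haspan
      simpa [vadd_eq_add, add_comm] using h3
    · rw [dist_eq_norm, add_sub_cancel_left, norm_smul, Real.norm_eq_abs, abs_of_pos hδpos]
      have : δ * ‖a - b‖ = ε / 2 := by rw [hδ]; field_simp
      rw [this]; linarith

lemma aux_combo {C : Set E} (hC : Convex ℝ C) {a y : E} (ha : a ∈ intrinsicInterior ℝ C)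
    (hy : y ∈ C) {t : ℝ} (ht0 : 0 ≤ t) (ht1 : t < 1) :
    (1 - t) • a + t • y ∈ intrinsicInterior ℝ C := by
  obtain ⟨ε, hε, h⟩ := aux_intrinsic_ball ha
  have haC : a ∈ C := intrinsicInterior_subset ha
  have h1t : (0:ℝ) < 1 - t := by linarith
  set m := (1 - t) • a + t • y with hm
  have hmC : m ∈ C := hC haC hy (le_of_lt h1t) ht0 (by ring)
  refine aux_intrinsic_of_ball hmC (mul_pos h1t hε) ?_
  intro z hz hdist
  set p := a + (1 - t)⁻¹ • (z - m) with hp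
  have hzspan : z - m ∈ (affineSpan ℝ C).direction :=
    AffineSubspace.vsub_mem_direction hz (subset_affineSpan ℝ C hmC)
  have hpspan : p ∈ affineSpan ℝ C := by
    have h3 := AffineSubspace.vadd_mem_of_mem_direction
      (Submodule.smul_mem _ ((1 - t)⁻¹) hzspan) (subset_affineSpan ℝ C haC)
    simpa [hp, vadd_eq_add, add_comm] using h3
  have hdp : dist p a < ε := by
    rw [dist_eq_norm] at hdist ⊢
    have he : p - a = (1 - t)⁻¹ • (z - m) := by rw [hp]; exact add_sub_cancel_left _ _
    rw [he, norm_smul, Real.norm_eq_abs, abs_of_pos (by positivity)]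
    calc (1 - t)⁻¹ * ‖z - m‖ < (1 - t)⁻¹ * ((1 - t) * ε) := by
          exact mul_lt_mul_of_pos_left hdist (by positivity)
      _ = ε := by field_simp
  have hpC : p ∈ C := intrinsicInterior_subset (h p hpspan hdp)
  have hzeq : z = (1 - t) • p + t • y := by
    rw [hp, hm]
    match_scalars <;> (field_simp; try ring)
  rw [hzeq]
  exact hC hpC hy (le_of_lt h1t) ht0 (by ring)

lemma aux_ri_convex {C : Set E} (hC : Convex ℝ C) : Convex ℝ (intrinsicInterior ℝ C) := by
  intro p hp q hq α β hα hβ hαβ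
  have hβ1 : β ≤ 1 := by linarith
  rcases eq_or_lt_of_le hβ1 with heq | hlt
  · have hα0 : α = 0 := by linarith
    rw [hα0, heq]; simpa using hq
  · have hα' : α = 1 - β := by linarith
    rw [hα']
    exact aux_combo hC hp (intrinsicInterior_subset hq) hβ hlt

lemma aux_support {C : Set E} (hC : Convex ℝ C) {x : E} (hx : x ∈ C)
    (hxr : x ∉ intrinsicInterior ℝ C) :
    ∃ u : E, (∀ y ∈ C, ⟪u, y⟫ ≤ ⟪u, x⟫) ∧ ∃ y ∈ C, ⟪u, y⟫ < ⟪u, x⟫ := by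
  obtain ⟨a₀, ha₀⟩ := Set.Nonempty.intrinsicInterior hC ⟨x, hx⟩
  set s := intrinsicInterior ℝ C with hs
  set D := (affineSpan ℝ C).direction with hD
  set U := s + (Dᗮ : Set E) with hU
  have hsU : s ⊆ U := fun p hp => ⟨p, hp, 0, zero_mem _, add_zero p⟩
  have hsconv : Convex ℝ s := aux_ri_convex hC
  have hUconv : Convex ℝ U := hsconv.add (Dᗮ).convex
  have hUopen : IsOpen U := by
    rw [Metric.isOpen_iff]
    rintro p ⟨y, hy, w, hw, rfl⟩
    obtain ⟨ε, hε, h⟩ := aux_intrinsic_ball hy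
    refine ⟨ε, hε, fun z hz => ?_⟩
    set d : E := ↑(Submodule.orthogonalProjectionOnto D (z - (y + w))) with hd
    have hd1 : d ∈ D := (Submodule.orthogonalProjectionOnto D (z - (y + w))).2
    have hd2 : z - (y + w) - d ∈ Dᗮ := Submodule.sub_starProjection_mem_orthogonal (K := D) _
    have hnd : ‖d‖ ≤ ‖z - (y + w)‖ := by
      have h1 := (Submodule.orthogonalProjectionOnto D).le_opNorm (z - (y + w))
      have h2 := Submodule.orthogonalProjectionOnto_norm_le D
      calc ‖d‖ = ‖Submodule.orthogonalProjectionOnto D (z - (y + w))‖ := rfl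
        _ ≤ ‖Submodule.orthogonalProjectionOnto D‖ * ‖z - (y + w)‖ := h1
        _ ≤ 1 * ‖z - (y + w)‖ := by
            exact mul_le_mul_of_nonneg_right h2 (norm_nonneg _)
        _ = ‖z - (y + w)‖ := one_mul _
    have hyspan : y ∈ affineSpan ℝ C := subset_affineSpan ℝ C (intrinsicInterior_subset hy)
    have hyd : y + d ∈ affineSpan ℝ C := by
      have := AffineSubspace.vadd_mem_of_mem_direction hd1 hyspan
      simpa [vadd_eq_add, add_comm] using this
    have hyds : y + d ∈ s := by
      refine h _ hyd ?_
      rw [dist_eq_norm, add_sub_cancel_left]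
      calc ‖d‖ ≤ ‖z - (y + w)‖ := hnd
        _ = dist z (y + w) := (dist_eq_norm _ _).symm
        _ < ε := hz
    exact ⟨y + d, hyds, w + (z - (y + w) - d), add_mem hw hd2, by module⟩
  have hxU : x ∉ U := by
    rintro ⟨y, hy, w, hw, hxyw⟩
    have hxy : x - y ∈ D := AffineSubspace.vsub_mem_direction (subset_affineSpan ℝ C hx)
      (subset_affineSpan ℝ C (intrinsicInterior_subset hy))
    have hw' : w = x - y := by rw [← hxyw]; module
    have hw0 : w = 0 := by
      have h0 : ⟪x - y, w⟫ = 0 := (Submodule.mem_orthogonal _ _).1 hw _ hxy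
      rw [hw'] at h0 ⊢
      exact inner_self_eq_zero.1 h0
    apply hxr
    have : x = y := by rw [hw0] at hw'; linear_combination (norm := module) hw'.symm
    rw [this]; exact hy
  obtain ⟨f, hf⟩ := geometric_hahn_banach_open_point hUconv hUopen hxU
  set u := (InnerProductSpace.toDual ℝ E).symm f with hu
  have hufa : ∀ z : E, ⟪u, z⟫ = f z := fun z => InnerProductSpace.toDual_symm_apply
  refine ⟨u, ?_, a₀, intrinsicInterior_subset ha₀, by rw [hufa, hufa]; exact hf _ (hsU ha₀)⟩
  intro y hyC
  rw [hufa, hufa]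
  by_contra hlt
  push_neg at hlt
  have hA : f a₀ < f x := hf _ (hsU ha₀)
  set t := (f x - f a₀) / (f y - f a₀) with ht
  have hYA : 0 < f y - f a₀ := by linarith
  have ht0 : 0 ≤ t := div_nonneg (by linarith) (le_of_lt hYA)
  have ht1 : t < 1 := by rw [ht, div_lt_one hYA]; linarith
  have hcombo : (1 - t) • a₀ + t • y ∈ s := aux_combo hC ha₀ hyC ht0 ht1
  have := hf _ (hsU hcombo)
  rw [map_add, map_smul, map_smul] at this
  simp only [smul_eq_mul] at this
  have htv : (1 - t) * f a₀ + t * f y = f x := by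
    rw [ht]; field_simp; ring
  linarith

lemma aux_normal_all {C G : Set E} (hGC : G ⊆ C) {x' : E} (hx' : x' ∈ intrinsicInterior ℝ G)
    {u : E} (hu : u ∈ normalCone C x') {z : E} (hz : z ∈ G) : u ∈ normalCone C z := by
  obtain ⟨ε, hε, hp⟩ := aux_extend hx' (subset_affineSpan ℝ G hz)
  have h1 := hu _ (hGC hp)
  have h2 := hu _ (hGC hz)
  have heq : ⟪u, z⟫ = ⟪u, x'⟫ := by
    simp only [inner_sub_right, inner_add_right, real_inner_smul_right] at h1 h2
    nlinarith
  intro y hy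
  have h3 := hu y hy
  rw [inner_sub_right] at h3 ⊢
  linarith

theorem stmt_5 (C : Set E) (hC : Convex ℝ C) (F : Set E) (hF : IsFace C F)
    (hFne : F ≠ ∅) (hFC : F ≠ C) :
    IsExpFace C (supExp C F) ∧ supExp C F ≠ ∅ ∧ supExp C F ≠ C ∧
    supExp C F = ⋂ u ∈ normalConeOf C F \ {0}, expFace C u ∧
    (∃ v ∈ intrinsicInterior ℝ (normalConeOf C F), v ≠ 0) ∧
    (∀ v ∈ intrinsicInterior ℝ (normalConeOf C F), v ≠ 0 → supExp C F = expFace C v) ∧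
    normalConeOf C (supExp C F) = normalConeOf C F := by
  obtain ⟨hFconv, hFC', hface⟩ := hF
  have hFne' : F.Nonempty := Set.nonempty_iff_ne_empty.2 hFne
  obtain ⟨c, hcC, hcF⟩ : ∃ c, c ∈ C ∧ c ∉ F := by
    by_contra h; push_neg at h
    exact hFC (Set.Subset.antisymm hFC' fun y hy => h y hy)
  obtain ⟨x, hx⟩ := Set.Nonempty.intrinsicInterior hFconv hFne'
  have hxF : x ∈ F := intrinsicInterior_subset hx
  have hxC : x ∈ C := hFC' hxF
  set N := normalCone C x with hN
  have key : ∀ u ∈ N, ∀ x' ∈ F, x' ∈ expFace C u := by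
    intro u hu x' hx'
    obtain ⟨ε, hε, hz⟩ := aux_extend hx (subset_affineSpan ℝ F hx')
    have h1 := hu _ (hFC' hz)
    have h2 := hu _ (hFC' hx')
    have heq : ⟪u, x'⟫ = ⟪u, x⟫ := by
      simp only [inner_sub_right, inner_add_right, real_inner_smul_right] at h1 h2
      nlinarith
    refine ⟨hFC' hx', fun y hy => ?_⟩
    have h3 := hu y hy
    rw [inner_sub_right] at h3
    linarith
  have hFsub : ∀ u ∈ N, F ⊆ expFace C u := fun u hu x' hx' => key u hu x' hx'
  have hNCF : normalConeOf C F = N := by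
    apply Set.Subset.antisymm
    · exact fun u hu => Set.mem_iInter₂.1 hu x hx
    · intro u hu
      refine Set.mem_iInter₂.2 fun x' hx' => ?_
      have hmem := key u hu _ (intrinsicInterior_subset hx')
      intro y hy
      rw [inner_sub_right]
      linarith [hmem.2 y hy]
  have hxnr : x ∉ intrinsicInterior ℝ C := by
    intro hxr
    obtain ⟨ε, hε, hz⟩ := aux_extend hxr (subset_affineSpan ℝ C hcC)
    have h1ε : (0:ℝ) < 1 + ε := by linarith
    have hmem : x ∈ openSegment ℝ c (x + ε • (x - c)) := by
      refine ⟨ε / (1 + ε), 1 / (1 + ε), by positivity, by positivity, by field_simp; ring, ?_⟩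
      match_scalars <;> (field_simp; try ring)
    exact hcF ((hface c hcC _ hz ⟨x, hmem, hxF⟩).1)
  obtain ⟨u₀, hu₀max, y₀, hy₀C, hy₀lt⟩ := aux_support hC hxC hxnr
  have hu₀N : u₀ ∈ N := by
    intro y hy; rw [inner_sub_right]; linarith [hu₀max y hy]
  have hy₀ : y₀ ∉ expFace C u₀ := fun hmem => absurd (hmem.2 x hxC) (by linarith)
  have hu₀0 : u₀ ≠ 0 := by
    intro h; rw [h] at hy₀lt; simp at hy₀lt
  have hNconv : Convex ℝ N := by
    intro u hu w hw a b ha hb hab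
    intro y hy
    have h1 := hu y hy
    have h2 := hw y hy
    rw [inner_add_left, real_inner_smul_left, real_inner_smul_left]
    nlinarith
  have hNne : (0:E) ∈ N := by intro y hy; simp
  have step2 : ∀ v ∈ intrinsicInterior ℝ N, ∀ u ∈ N, expFace C v ⊆ expFace C u := by
    intro v hv u hu y hyF
    have hvN : v ∈ N := intrinsicInterior_subset hv
    obtain ⟨ε, hε, hw⟩ := aux_extend hv (subset_affineSpan ℝ N hu)
    have hxv : x ∈ expFace C v := key v hvN x hxF
    have hvy : ⟪v, y - x⟫ = 0 := by
      rw [inner_sub_right]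
      linarith [hyF.2 x hxC, hxv.2 y hyF.1]
    have hwy : ⟪v + ε • (v - u), y - x⟫ ≤ 0 := hw _ hyF.1
    have huy : ⟪u, y - x⟫ ≤ 0 := hu _ hyF.1
    have huy0 : ⟪u, y - x⟫ = 0 := by
      rw [inner_add_left, real_inner_smul_left, inner_sub_left] at hwy
      nlinarith
    have hxu : x ∈ expFace C u := key u hu x hxF
    refine ⟨hyF.1, fun z hz => ?_⟩
    rw [inner_sub_right] at huy0
    linarith [hxu.2 z hz]
  have main : ∀ v ∈ intrinsicInterior ℝ N, v ≠ 0 → supExp C F = expFace C v := by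
    intro v hv hv0
    apply Set.Subset.antisymm
    · exact Set.sInter_subset_of_mem
        ⟨Or.inr (Or.inr ⟨v, hv0, rfl⟩), hFsub v (intrinsicInterior_subset hv)⟩
    · intro y hy
      refine Set.mem_sInter.2 fun G hG => ?_
      rcases hG.1 with rfl | rfl | ⟨u, hu0, rfl⟩
      · exact absurd (hG.2 hxF) (Set.notMem_empty x)
      · exact hy.1
      · have huN : u ∈ N := by
          have hxG := hG.2 hxF
          intro z hz; rw [inner_sub_right]; linarith [hxG.2 z hz]
        exact step2 v hv u huN hy
  obtain ⟨w, hw⟩ := Set.Nonempty.intrinsicInterior hNconv ⟨0, hNne⟩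
  obtain ⟨v, hv, hv0⟩ : ∃ v ∈ intrinsicInterior ℝ N, v ≠ 0 := by
    by_cases hw0 : w = 0
    · refine ⟨(1 - 2⁻¹) • w + 2⁻¹ • u₀,
        aux_combo hNconv hw hu₀N (by norm_num) (by norm_num), ?_⟩
      rw [hw0]
      simp only [smul_zero, zero_add]
      exact smul_ne_zero (by norm_num) hu₀0
    · exact ⟨w, hw, hw0⟩
  have hsup := main v hv hv0
  have hGconv : Convex ℝ (expFace C v) := by
    intro p hp q hq a b ha hb hab
    refine ⟨hC hp.1 hq.1 ha hb hab, fun y hy => ?_⟩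
    rw [inner_add_right, real_inner_smul_right, real_inner_smul_right]
    have hb' : b = 1 - a := by linarith
    subst hb'
    nlinarith [mul_le_mul_of_nonneg_left (hp.2 y hy) ha, mul_le_mul_of_nonneg_left (hq.2 y hy) hb]
  have hGne : (expFace C v).Nonempty := ⟨x, key v (intrinsicInterior_subset hv) x hxF⟩
  obtain ⟨x', hx'⟩ := Set.Nonempty.intrinsicInterior hGconv hGne
  have hGsubC : expFace C v ⊆ C := fun z hz => hz.1
  have hGN : normalConeOf C (expFace C v) = N := by
    apply Set.Subset.antisymm
    · intro u hu
      exact aux_normal_all hGsubC hx' (Set.mem_iInter₂.1 hu x' hx')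
        (key v (intrinsicInterior_subset hv) x hxF)
    · intro u hu
      refine Set.mem_iInter₂.2 fun z hz => ?_
      have hmem := step2 v hv u hu (intrinsicInterior_subset hz)
      intro y hy
      rw [inner_sub_right]
      linarith [hmem.2 y hy]
  have hFsup : F ⊆ supExp C F := Set.subset_sInter fun G hG => hG.2
  refine ⟨Or.inr (Or.inr ⟨v, hv0, hsup⟩), Set.Nonempty.ne_empty ⟨x, hFsup hxF⟩, ?_, ?_, ?_, ?_, ?_⟩
  · intro hEq
    have : expFace C v = C := hsup.symm.trans hEq
    exact hy₀ (step2 v hv u₀ hu₀N (this.symm ▸ hy₀C))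
  · rw [hNCF, hsup]
    apply Set.Subset.antisymm
    · refine Set.subset_iInter₂ fun u hu => ?_
      exact step2 v hv u hu.1
    · exact Set.iInter₂_subset v ⟨intrinsicInterior_subset hv, hv0⟩
  · exact ⟨v, by rw [hNCF]; exact hv, hv0⟩
  · rw [hNCF]; exact main
  · rw [hsup, hNCF, hGN]
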